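/- Let R be a reduced commutative ring with only finitely many minimal prime ideals, and set T = ∏_{p ∈ min(R)} (R/p)⁺, where (R/p)⁺ is the integral closure of R/p in an algebraic closure of Frac(R/p), with the canonical map R → T. Then T is an absolute integral closure of R, and it is universal: every absolute integral closure S of R admits an injective R-algebra homomorphism into T. -/

import Mathlib

/-- A ring extension `f : R →+* S` is *tight* if every nonzero ideal of `S` contracts to a
nonzero ideal of `R`. -/
def Tight {R S : Type*} [CommRing R] [CommRing S] (f : R →+* S) : Prop :=
  ∀ s : S, s ≠ 0 → ∃ t : S, ∃ r : R, r ≠ 0 ∧ s * t = f r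

/-- A commutative ring `S` is *absolutely integrally closed* if every monic polynomial of
positive degree over `S` has a root in `S`. -/
def AIClosed (S : Type*) [CommRing S] : Prop :=
  ∀ p : Polynomial S, p.Monic → 0 < p.degree → ∃ x : S, p.IsRoot x

/-- `f : R →+* S` realizes `S` as an *absolute integral closure* of `R`. -/
def IsAIC {R S : Type*} [CommRing R] [CommRing S] (f : R →+* S) : Prop :=
  Function.Injective f ∧ f.IsIntegral ∧ Tight f ∧ AIClosed S

/-- Minimal primes are prime. -/
instance minimalPrimes.isPrime' {R : Type u} [CommRing R] (p : minimalPrimes R) :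
    (p : Ideal R).IsPrime := p.2.1.1

/-- The canonical map `R → T = ∏_{p ∈ min(R)} (R/p)⁺`. -/
noncomputable def minPlusMap (R : Type u) [CommRing R] :
    R →+* ∀ p : minimalPrimes R,
      integralClosure (R ⧸ (p : Ideal R))
        (AlgebraicClosure (FractionRing (R ⧸ (p : Ideal R)))) :=
  Pi.ringHom fun p =>
    (algebraMap (R ⧸ (p : Ideal R))
      (integralClosure (R ⧸ (p : Ideal R))
        (AlgebraicClosure (FractionRing (R ⧸ (p : Ideal R)))))).comp
      (Ideal.Quotient.mk (p : Ideal R))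

open Polynomial in
/-- In a domain, an integral element divides (up to unit-free cofactor) a nonzero element of the
base ring. -/
theorem aux_tight_of_integral {A B : Type*} [CommRing A] [CommRing B] [IsDomain B]
    (f : A →+* B) (x : B) (hx : x ≠ 0) :
    ∀ n (p : A[X]), p.natDegree = n → p.Monic → p.eval₂ f x = 0 →
      ∃ y : B, ∃ a : A, f a ≠ 0 ∧ x * y = f a := by
  intro n
  induction n using Nat.strong_induction_on with
  | _ n ih =>
    intro p hn hm hp
    have key : p.eval₂ f x = x * p.divX.eval₂ f x + f (p.coeff 0) := by
      conv_lhs => rw [← p.X_mul_divX_add]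
      rw [eval₂_add, eval₂_mul, eval₂_X, eval₂_C]
    by_cases h0 : f (p.coeff 0) = 0
    · have hxe : x * p.divX.eval₂ f x = 0 := by
        have := key.symm.trans hp
        rw [h0, add_zero] at this; exact this
      have he : p.divX.eval₂ f x = 0 := (mul_eq_zero.mp hxe).resolve_left hx
      rcases n with _ | m
      · exfalso
        have h1 : p = 1 := hm.natDegree_eq_zero.mp hn
        rw [h1] at hp; simp at hp
      · have hne : p.natDegree = m + 1 := hn
        have hdm : p.divX.natDegree = m := by
          rw [natDegree_divX_eq_natDegree_tsub_one, hne]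
          omega
        have hmonic : p.divX.Monic := by
          unfold Polynomial.Monic Polynomial.leadingCoeff
          rw [hdm, coeff_divX, ← hne]
          exact hm.coeff_natDegree
        exact ih m (by omega) p.divX hdm hmonic he
    · refine ⟨-(p.divX.eval₂ f x), p.coeff 0, h0, ?_⟩
      have h2 : x * p.divX.eval₂ f x + f (p.coeff 0) = 0 := key.symm.trans hp
      linear_combination -h2

open Polynomial in
/-- The integral closure of a domain in an algebraically closed field is absolutely
integrally closed. -/
theorem aux_aiClosed (D : Type*) [CommRing D] (K : Type*) [Field K]
    [IsAlgClosed K] [Algebra D K] : AIClosed (integralClosure D K) := by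
  intro p hm hdeg
  obtain ⟨z, hz⟩ := IsAlgClosed.exists_root
    (p.map (algebraMap (integralClosure D K) K))
    (by rw [hm.degree_map]; exact hdeg.ne')
  have hz0 : p.eval₂ (algebraMap (integralClosure D K) K) z = 0 := by
    rwa [← eval_map]
  have hzi : IsIntegral (integralClosure D K) z := ⟨p, hm, hz0⟩
  have hzD : IsIntegral D z := isIntegral_trans z hzi
  refine ⟨⟨z, hzD⟩, ?_⟩
  have hcoe : (algebraMap (integralClosure D K) K) ⟨z, hzD⟩ = z := rfl
  have hval : (algebraMap (integralClosure D K) K) (p.eval ⟨z, hzD⟩) = 0 := by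
    rw [← eval₂_at_apply, hcoe, hz0]
  exact Subtype.ext (by simpa using hval)

/-- Lying over and embedding a quotient into `(R/p)⁺`: the key component construction for the
universal property. -/
theorem aux_component {R : Type u} [CommRing R] {S : Type v} [CommRing S] (g : R →+* S)
    (hint : g.IsIntegral) (hinj : Function.Injective g) (p : Ideal R) [p.IsPrime] :
    ∃ hp : S →+* integralClosure (R ⧸ p) (AlgebraicClosure (FractionRing (R ⧸ p))),
      hp.comp g = (algebraMap (R ⧸ p) (integralClosure (R ⧸ p)
        (AlgebraicClosure (FractionRing (R ⧸ p))))).comp (Ideal.Quotient.mk p) := by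
  letI := g.toAlgebra
  haveI : Algebra.IsIntegral R S := ⟨hint⟩
  obtain ⟨Q, -, hQprime, hQcomap⟩ := Ideal.exists_ideal_over_prime_of_isIntegral p ⊥
    (by
      intro x hx
      have hx0 : g x = 0 := hx
      have : x = 0 := hinj (by rw [hx0, map_zero])
      exact this ▸ p.zero_mem)
  haveI := hQprime
  set gbar := Ideal.quotientMap Q (algebraMap R S) (le_of_eq hQcomap.symm) with hgbar
  have hgbar_inj : Function.Injective gbar :=
    Ideal.quotientMap_injective' (le_of_eq hQcomap)
  have hgbar_int : gbar.IsIntegral := by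
    intro xbar
    obtain ⟨x, rfl⟩ := Ideal.Quotient.mk_surjective xbar
    obtain ⟨P, hPm, hP⟩ := hint x
    refine ⟨P.map (Ideal.Quotient.mk p), hPm.map _, ?_⟩
    have hP' : Polynomial.eval₂ (algebraMap R S) x P = 0 := hP
    rw [Polynomial.eval₂_map, Ideal.quotientMap_comp_mk, ← Polynomial.hom_eval₂, hP', map_zero]
  letI : Algebra (R ⧸ p) (S ⧸ Q) := gbar.toAlgebra
  haveI : Algebra.IsIntegral (R ⧸ p) (S ⧸ Q) := ⟨hgbar_int⟩
  haveI : Module.IsTorsionFree (R ⧸ p) (S ⧸ Q) :=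
    Module.isTorsionFree_iff_algebraMap_injective.mpr hgbar_inj
  haveI : Module.IsTorsionFree (R ⧸ p) (AlgebraicClosure (FractionRing (R ⧸ p))) := by
    apply Module.isTorsionFree_iff_algebraMap_injective.mpr
    rw [IsScalarTower.algebraMap_eq (R ⧸ p) (FractionRing (R ⧸ p))
      (AlgebraicClosure (FractionRing (R ⧸ p))), RingHom.coe_comp]
    exact (RingHom.injective _).comp (IsFractionRing.injective _ _)
  let φ : (S ⧸ Q) →ₐ[R ⧸ p] AlgebraicClosure (FractionRing (R ⧸ p)) := IsAlgClosed.lift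
  have hmem : ∀ s : S, φ ((Ideal.Quotient.mk Q) s) ∈
      integralClosure (R ⧸ p) (AlgebraicClosure (FractionRing (R ⧸ p))) :=
    fun s => (Algebra.IsIntegral.isIntegral ((Ideal.Quotient.mk Q) s)).map φ
  refine ⟨RingHom.codRestrict (φ.toRingHom.comp (Ideal.Quotient.mk Q))
    (integralClosure (R ⧸ p) (AlgebraicClosure (FractionRing (R ⧸ p)))) hmem, ?_⟩
  ext r
  show φ ((Ideal.Quotient.mk Q) (g r)) =
    ((algebraMap (R ⧸ p) (integralClosure (R ⧸ p)
      (AlgebraicClosure (FractionRing (R ⧸ p))))) ((Ideal.Quotient.mk p) r) :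
        AlgebraicClosure (FractionRing (R ⧸ p)))
  have h1 : (Ideal.Quotient.mk Q) (g r) = gbar ((Ideal.Quotient.mk p) r) :=
    Ideal.quotientMap_mk.symm
  rw [h1]
  exact φ.commutes ((Ideal.Quotient.mk p) r)

set_option maxHeartbeats 2000000 in
set_option synthInstance.maxHeartbeats 1000000 in
/-- For a reduced ring `R` with finitely many minimal primes,
`T = ∏_{p ∈ min(R)} (R/p)⁺` is an absolute integral closure of `R`, and it is universal:
every absolute integral closure of `R` embeds into `T` over `R`. -/
theorem minPlus_isAIC_and_universal (R : Type u) [CommRing R] [IsReduced R]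
    (hfin : (minimalPrimes R).Finite) :
    IsAIC (minPlusMap R) ∧
      ∀ (S : Type v) [CommRing S] (g : R →+* S), IsAIC g →
        ∃ h : S →+* ∀ p : minimalPrimes R,
            integralClosure (R ⧸ (p : Ideal R))
              (AlgebraicClosure (FractionRing (R ⧸ (p : Ideal R)))),
          Function.Injective h ∧ h.comp g = minPlusMap R := by
  classical
  haveI := hfin.fintype
  -- notation
  have hcomp_apply : ∀ (r : R) (p : minimalPrimes R),
      minPlusMap R r p = (algebraMap (R ⧸ (p : Ideal R))
        (integralClosure (R ⧸ (p : Ideal R))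
          (AlgebraicClosure (FractionRing (R ⧸ (p : Ideal R))))))
        ((Ideal.Quotient.mk (p : Ideal R)) r) := fun r p => rfl
  -- injectivity of the algebra map R/p → K_p
  have halg_inj : ∀ p : minimalPrimes R,
      Function.Injective (algebraMap (R ⧸ (p : Ideal R))
        (AlgebraicClosure (FractionRing (R ⧸ (p : Ideal R))))) := by
    intro p
    rw [IsScalarTower.algebraMap_eq (R ⧸ (p : Ideal R)) (FractionRing (R ⧸ (p : Ideal R)))
      (AlgebraicClosure (FractionRing (R ⧸ (p : Ideal R)))), RingHom.coe_comp]
    exact (RingHom.injective _).comp (IsFractionRing.injective _ _)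
  -- injectivity of minPlusMap
  have hinj : Function.Injective (minPlusMap R) := by
    rw [injective_iff_map_eq_zero]
    intro r hr
    have hmem : ∀ p : minimalPrimes R, r ∈ (p : Ideal R) := by
      intro p
      have h1 := congrFun hr p
      rw [hcomp_apply] at h1
      have h2 : ((algebraMap (R ⧸ (p : Ideal R))
          (AlgebraicClosure (FractionRing (R ⧸ (p : Ideal R)))))
          ((Ideal.Quotient.mk (p : Ideal R)) r)) = 0 := by
        have := congrArg Subtype.val h1
        simpa using this
      have h3 : (Ideal.Quotient.mk (p : Ideal R)) r = 0 :=
        halg_inj p (by rw [h2, map_zero])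
      exact Ideal.Quotient.eq_zero_iff_mem.mp h3
    have hs : r ∈ sInf (minimalPrimes R) :=
      Ideal.mem_sInf.mpr fun {I} hI => hmem ⟨I, hI⟩
    have hsinf : sInf (minimalPrimes R) = ⊥ := by
      show sInf ((⊥ : Ideal R).minimalPrimes) = ⊥
      rw [Ideal.sInf_minimalPrimes]
      have : (⊥ : Ideal R).radical = nilradical R := rfl
      rw [this, nilradical_eq_zero R]
      rfl
    rw [hsinf] at hs
    exact hs
  -- integrality
  have hint : (minPlusMap R).IsIntegral := by
    intro x
    have hfp : ∀ p : minimalPrimes R,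
        ((algebraMap (R ⧸ (p : Ideal R))
          (integralClosure (R ⧸ (p : Ideal R))
            (AlgebraicClosure (FractionRing (R ⧸ (p : Ideal R)))))).comp
          (Ideal.Quotient.mk (p : Ideal R))).IsIntegral := by
      intro p
      refine RingHom.IsIntegral.trans _ _ ?_ ?_
      · exact (Ideal.Quotient.mk (p : Ideal R)).isIntegral_of_surjective
          Ideal.Quotient.mk_surjective
      · intro y
        exact integralClosure.isIntegral y
    choose q hq1 hq2 using fun p : minimalPrimes R => hfp p (x p)
    refine ⟨∏ p : minimalPrimes R, q p, Polynomial.monic_prod_of_monic _ _ fun p _ => hq1 p, ?_⟩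
    funext p
    have hπ : (Pi.evalRingHom _ p).comp (minPlusMap R) =
        (algebraMap (R ⧸ (p : Ideal R))
          (integralClosure (R ⧸ (p : Ideal R))
            (AlgebraicClosure (FractionRing (R ⧸ (p : Ideal R)))))).comp
          (Ideal.Quotient.mk (p : Ideal R)) := rfl
    calc Polynomial.eval₂ (minPlusMap R) x (∏ p : minimalPrimes R, q p) p
        = (Pi.evalRingHom _ p) (Polynomial.eval₂ (minPlusMap R) x
            (∏ p : minimalPrimes R, q p)) := rfl
      _ = 0 := by
          rw [Polynomial.hom_eval₂, hπ, Polynomial.eval₂_finset_prod]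
          exact Finset.prod_eq_zero (Finset.mem_univ p) (hq2 p)
  -- tightness
  have htight : Tight (minPlusMap R) := by
    intro s hs
    have : ∃ q : minimalPrimes R, s q ≠ 0 := by
      by_contra hc
      push_neg at hc
      exact hs (funext hc)
    obtain ⟨q, hq⟩ := this
    obtain ⟨P, hPm, hP⟩ := integralClosure.isIntegral (R := R ⧸ (q : Ideal R)) (s q)
    obtain ⟨y, a, ha, hya⟩ := aux_tight_of_integral _ (s q) hq P.natDegree P rfl hPm hP
    have ha0 : a ≠ 0 := fun h => ha (by rw [h, map_zero])
    -- find c in all other minimal primes but not in q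
    have hex : ∃ c : R, c ∉ (q : Ideal R) ∧
        ∀ p : minimalPrimes R, p ≠ q → c ∈ (p : Ideal R) := by
      have hnle : ¬ (∏ p ∈ Finset.univ.erase q, (p : Ideal R)) ≤ (q : Ideal R) := by
        intro hle
        obtain ⟨p, hpmem, hple⟩ := (Ideal.IsPrime.prod_le inferInstance).mp hle
        have : (q : Ideal R) ≤ (p : Ideal R) := q.2.2 ⟨p.2.1.1, bot_le⟩ hple
        have : p = q := Subtype.ext (le_antisymm hple this)
        exact (Finset.mem_erase.mp hpmem).1 this
      obtain ⟨c, hc1, hc2⟩ := Set.not_subset.mp fun h => hnle h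
      refine ⟨c, hc2, fun p hp => ?_⟩
      exact Ideal.prod_le_inf.trans (Finset.inf_le (Finset.mem_erase.mpr
        ⟨hp, Finset.mem_univ p⟩)) hc1
    obtain ⟨c, hcq, hcp⟩ := hex
    obtain ⟨r'', hr''⟩ := Ideal.Quotient.mk_surjective a
    refine ⟨Function.update (0 : ∀ p : minimalPrimes R, integralClosure (R ⧸ (p : Ideal R))
      (AlgebraicClosure (FractionRing (R ⧸ (p : Ideal R))))) q
      ((algebraMap (R ⧸ (q : Ideal R)) _) ((Ideal.Quotient.mk (q : Ideal R)) c) * y),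
      c * r'', ?_, ?_⟩
    · intro h
      have h1 : (Ideal.Quotient.mk (q : Ideal R)) (c * r'') = 0 := by rw [h, map_zero]
      rw [map_mul, hr''] at h1
      have hc0 : (Ideal.Quotient.mk (q : Ideal R)) c ≠ 0 :=
        fun h2 => hcq (Ideal.Quotient.eq_zero_iff_mem.mp h2)
      exact (mul_ne_zero hc0 ha0) h1
    · funext p
      by_cases hp : p = q
      · subst hp
        simp only [Pi.mul_apply, Function.update_self, hcomp_apply, RingHom.comp_apply]
        rw [map_mul, map_mul, hr'', mul_left_comm, hya]
      · simp only [Pi.mul_apply, Function.update_of_ne hp, hcomp_apply, RingHom.comp_apply,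
          Pi.zero_apply, mul_zero]
        have : (Ideal.Quotient.mk (p : Ideal R)) (c * r'') = 0 :=
          Ideal.Quotient.eq_zero_iff_mem.mpr (Ideal.mul_mem_right r'' _ (hcp p hp))
        rw [this, map_zero]
  -- AI closedness
  have hai : AIClosed (∀ p : minimalPrimes R, integralClosure (R ⧸ (p : Ideal R))
      (AlgebraicClosure (FractionRing (R ⧸ (p : Ideal R))))) := by
    intro P hPm hPdeg
    have : ∀ p : minimalPrimes R, ∃ x, (P.map (Pi.evalRingHom _ p)).IsRoot x := by
      intro p
      refine aux_aiClosed _ _ (P.map (Pi.evalRingHom _ p)) (hPm.map _) ?_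
      rwa [hPm.degree_map]
    choose x hx using this
    refine ⟨x, ?_⟩
    show P.eval x = 0
    funext p
    show (Pi.evalRingHom _ p) (P.eval x) = 0
    rw [← Polynomial.eval₂_at_apply, ← Polynomial.eval_map]
    exact hx p
  refine ⟨⟨hinj, hint, htight, hai⟩, ?_⟩
  -- universality
  intro S _ g hg
  obtain ⟨hginj, hgint, hgtight, -⟩ := hg
  choose hp hcomp using fun p : minimalPrimes R =>
    aux_component g hgint hginj (p : Ideal R)
  refine ⟨Pi.ringHom hp, ?_, ?_⟩
  · rw [injective_iff_map_eq_zero]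
    intro s hs
    by_contra hs0
    obtain ⟨t, r, hr, hst⟩ := hgtight s hs0
    have hh : (Pi.ringHom hp).comp g = minPlusMap R :=
      RingHom.ext fun r => funext fun p => RingHom.congr_fun (hcomp p) r
    have : minPlusMap R r = 0 := by
      rw [← RingHom.congr_fun hh r]
      show Pi.ringHom hp (g r) = 0
      rw [← hst, map_mul]
      show Pi.ringHom hp s * _ = 0
      rw [show Pi.ringHom hp s = 0 from hs, zero_mul]
    exact hr (hinj (by rw [this, map_zero]))
  · exact RingHom.ext fun r => funext fun p => RingHom.congr_fun (hcomp p) r
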